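/- Let r ≥ 2 be a fixed integer. For every natural number n, the number of partitions of n in which each odd part 2k − 1 (k ≥ 1) appears at most (2r − 1)(k − 1) times, with no restriction on the multiplicities of even parts, equals the number of partitions of n in which no part is an odd-indexed (2r+1)-gonal number, i.e. no part is of the form (2k − 1)·((2r − 1)·k − (2r − 2)) for some positive integer k. -/

import Mathlib

open PowerSeries Finset
open Finset.HasAntidiagonal

namespace SellersAux

open scoped Classical

noncomputable section

variable {α : Type*}

/-- A convenience constructor for the power series whose coefficients indicate a subset. -/
def indicatorSeries (α : Type*) [Semiring α] (s : Set ℕ) : PowerSeries α :=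
  PowerSeries.mk fun n => if n ∈ s then 1 else 0

theorem coeff_indicator (s : Set ℕ) [Semiring α] (n : ℕ) :
    coeff (R := α) n (indicatorSeries _ s) = if n ∈ s then 1 else 0 :=
  coeff_mk _ _

theorem coeff_indicator_pos (s : Set ℕ) [Semiring α] (n : ℕ) (h : n ∈ s) :
    coeff (R := α) n (indicatorSeries _ s) = 1 := by rw [coeff_indicator, if_pos h]

theorem coeff_indicator_neg (s : Set ℕ) [Semiring α] (n : ℕ) (h : n ∉ s) :
    coeff (R := α) n (indicatorSeries _ s) = 0 := by rw [coeff_indicator, if_neg h]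

theorem constantCoeff_indicator (s : Set ℕ) [Semiring α] :
    constantCoeff (R := α) (indicatorSeries _ s) = if 0 ∈ s then 1 else 0 :=
  rfl

theorem num_series' [Field α] (i : ℕ) :
    (1 - (X : PowerSeries α) ^ (i + 1))⁻¹ = indicatorSeries α {k | i + 1 ∣ k} := by
  rw [PowerSeries.inv_eq_iff_mul_eq_one]
  · ext n
    cases n with
    | zero => simp [mul_sub, zero_pow, constantCoeff_indicator]
    | succ n =>
      simp only [coeff_one, if_false, mul_sub, mul_one, coeff_indicator,
        LinearMap.map_sub, reduceCtorEq]
      simp_rw [coeff_mul, coeff_X_pow, coeff_indicator, @boole_mul _ _ _ _]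
      erw [@sum_ite _ _ _ _ _ (fun _ => Classical.propDecidable _), sum_ite]
      simp_rw [@filter_filter _ _ _ _ _, sum_const_zero, add_zero, sum_const, nsmul_eq_mul, mul_one,
        sub_eq_iff_eq_add, zero_add]
      symm
      split_ifs with h
      · suffices #{a ∈ antidiagonal (n + 1) | i + 1 ∣ a.fst ∧ a.snd = i + 1} = 1 by
          simp only [Set.mem_setOf_eq]; convert congr_arg ((↑) : ℕ → α) this; norm_cast
        rw [card_eq_one]
        cases' h with p hp
        refine ⟨((i + 1) * (p - 1), i + 1), ?_⟩
        ext ⟨a₁, a₂⟩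
        simp only [mem_filter, Prod.mk_inj, HasAntidiagonal.mem_antidiagonal, mem_singleton]
        constructor
        · rintro ⟨a_left, ⟨a, rfl⟩, rfl⟩
          refine ⟨?_, rfl⟩
          rw [Nat.mul_sub_left_distrib, ← hp, ← a_left, mul_one, Nat.add_sub_cancel]
        · rintro ⟨rfl, rfl⟩
          match p with
          | 0 => rw [mul_zero] at hp; cases hp
          | p + 1 => rw [hp]; simp [mul_add]
      · suffices #{a ∈ antidiagonal (n + 1) | i + 1 ∣ a.fst ∧ a.snd = i + 1} = 0 by
          simp only [Set.mem_setOf_eq]; convert congr_arg ((↑) : ℕ → α) this; norm_cast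
        rw [card_eq_zero]
        apply eq_empty_of_forall_notMem
        simp only [Prod.forall, mem_filter, not_and, HasAntidiagonal.mem_antidiagonal]
        rintro _ h₁ h₂ ⟨a, rfl⟩ rfl
        apply h
        simp [← h₂]
  · simp [zero_pow]

-- The main workhorse (copied from Archive/Wiedijk100Theorems/Partition.lean).
theorem partialGF_prop (α : Type*) [CommSemiring α] (n : ℕ) (s : Finset ℕ) (hs : ∀ i ∈ s, 0 < i)
    (c : ℕ → Set ℕ) (hc : ∀ i, i ∉ s → 0 ∈ c i) :
    #{p : n.Partition | (∀ j, p.parts.count j ∈ c j) ∧ ∀ j ∈ p.parts, j ∈ s} =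
      coeff (R := α) n (∏ i ∈ s, indicatorSeries α ((· * i) '' c i)) := by
  simp_rw [coeff_prod, coeff_indicator, prod_boole, sum_boole]
  apply congr_arg
  simp only [mem_univ, forall_true_left, not_and, not_forall, exists_prop,
    Set.mem_image, not_exists]
  set φ : (a : Nat.Partition n) →
    a ∈ filter (fun p ↦ (∀ (j : ℕ), Multiset.count j p.parts ∈ c j) ∧ ∀ j ∈ p.parts, j ∈ s) univ →
    ℕ →₀ ℕ := fun p _ => {
      toFun := fun i => Multiset.count i p.parts • i
      support := Finset.filter (fun i => i ≠ 0) p.parts.toFinset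
      mem_support_toFun := fun a => by
        simp only [smul_eq_mul, ne_eq, mul_eq_zero, Multiset.count_eq_zero]
        rw [not_or, not_not]
        simp only [Multiset.mem_toFinset, not_not, mem_filter] }
  refine Finset.card_bij φ ?_ ?_ ?_
  · intro a ha
    simp only [φ, not_forall, not_exists, not_and, exists_prop, mem_filter]
    rw [mem_finsuppAntidiag]
    dsimp only [ne_eq, smul_eq_mul, id_eq, eq_mpr_eq_cast, le_eq_subset, Finsupp.coe_mk]
    simp only [mem_univ, forall_true_left, not_and, not_forall, exists_prop,
      mem_filter, true_and] at ha
    refine ⟨⟨?_, fun i ↦ ?_⟩, fun i _ ↦ ⟨a.parts.count i, ha.1 i, rfl⟩⟩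
    · conv_rhs => simp [← a.parts_sum]
      rw [sum_multiset_count_of_subset _ s]
      · simp only [smul_eq_mul]
      · intro i
        simp only [Multiset.mem_toFinset, not_not, mem_filter]
        apply ha.2
    · simp only [ne_eq, Multiset.mem_toFinset, not_not, mem_filter, and_imp]
      exact fun hi _ ↦ ha.2 i hi
  · intro p₁ hp₁ p₂ hp₂ h
    apply Nat.Partition.ext
    simp only [true_and, mem_univ, mem_filter] at hp₁ hp₂
    ext i
    simp only [φ, ne_eq, Multiset.mem_toFinset, not_not, smul_eq_mul, Finsupp.mk.injEq] at h
    by_cases hi : i = 0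
    · rw [hi]
      rw [Multiset.count_eq_zero_of_notMem]
      · rw [Multiset.count_eq_zero_of_notMem]
        intro a; exact Nat.lt_irrefl 0 (hs 0 (hp₂.2 0 a))
      intro a; exact Nat.lt_irrefl 0 (hs 0 (hp₁.2 0 a))
    · rw [← mul_left_inj' hi]
      rw [funext_iff] at h
      exact h.2 i
  · simp only [φ, mem_filter, mem_finsuppAntidiag, mem_univ, exists_prop, true_and, and_assoc]
    rintro f ⟨hf, hf₃, hf₄⟩
    have hf' : f ∈ finsuppAntidiag s n := mem_finsuppAntidiag.mpr ⟨hf, hf₃⟩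
    simp only [mem_finsuppAntidiag] at hf'
    refine ⟨⟨∑ i ∈ s, Multiset.replicate (f i / i) i, ?_, ?_⟩, ?_, ?_, ?_⟩
    · intro i hi
      simp only [exists_prop, Multiset.mem_sum, mem_map, Function.Embedding.coeFn_mk] at hi
      rcases hi with ⟨t, ht, z⟩
      apply hs
      rwa [Multiset.eq_of_mem_replicate z]
    · simp_rw [Multiset.sum_sum, Multiset.sum_replicate, Nat.nsmul_eq_mul]
      rw [← hf'.1]
      refine sum_congr rfl fun i hi => Nat.div_mul_cancel ?_
      rcases hf₄ i hi with ⟨w, _, hw₂⟩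
      rw [← hw₂]
      exact dvd_mul_left _ _
    · intro i
      simp_rw [Multiset.count_sum', Multiset.count_replicate, sum_ite_eq']
      split_ifs with h
      · rcases hf₄ i h with ⟨w, hw₁, hw₂⟩
        rwa [← hw₂, Nat.mul_div_cancel _ (hs i h)]
      · exact hc _ h
    · intro i hi
      rw [Multiset.mem_sum] at hi
      rcases hi with ⟨j, hj₁, hj₂⟩
      rwa [Multiset.eq_of_mem_replicate hj₂]
    · ext i
      simp_rw [Multiset.count_sum', Multiset.count_replicate, sum_ite_eq']
      simp only [ne_eq, Multiset.mem_toFinset, not_not, smul_eq_mul, ite_mul,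
        zero_mul, Finsupp.coe_mk]
      split_ifs with h
      · apply Nat.div_mul_cancel
        rcases hf₄ i h with ⟨w, _, hw₂⟩
        apply Dvd.intro_left _ hw₂
      · apply symm
        rw [← Finsupp.notMem_support_iff]
        exact notMem_mono hf'.2 h


/-- Indicator of a truncated geometric progression. -/
theorem indicator_trunc_geom [Field α] (i B : ℕ) :
    indicatorSeries α ((· * (i + 1)) '' {t | t ≤ B}) =
      (1 - X ^ ((i + 1) * (B + 1))) * (1 - X ^ (i + 1))⁻¹ := by
  rw [num_series', sub_mul, one_mul]
  have hmem : ∀ n : ℕ, n ∈ (· * (i + 1)) '' {t | t ≤ B} ↔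
      (i + 1) ∣ n ∧ n < (i + 1) * (B + 1) := by
    intro n
    constructor
    · rintro ⟨t, ht, rfl⟩
      refine ⟨Dvd.intro_left t rfl, ?_⟩
      calc t * (i + 1) = (i + 1) * t := mul_comm _ _
        _ < (i + 1) * (B + 1) := by
          exact (Nat.mul_lt_mul_left (Nat.succ_pos i)).mpr (Nat.lt_succ_of_le ht)
    · rintro ⟨⟨q, rfl⟩, hlt⟩
      have hq : q ≤ B := by
        have := Nat.lt_of_mul_lt_mul_left (a := i + 1) hlt
        omega
      exact ⟨q, hq, mul_comm _ _⟩
  ext n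
  rw [map_sub, coeff_indicator, coeff_indicator, coeff_X_pow_mul', coeff_indicator]
  simp only [Set.mem_setOf_eq]
  have hdvd : (i + 1) ∣ (i + 1) * (B + 1) := Dvd.intro _ rfl
  by_cases hd : (i + 1) ∣ n
  · by_cases hn : n < (i + 1) * (B + 1)
    · rw [if_pos ((hmem n).2 ⟨hd, hn⟩), if_pos hd, if_neg (by omega), sub_zero]
    · have h1 : (i + 1) * (B + 1) ≤ n := by omega
      have h2 : (i + 1) ∣ n - (i + 1) * (B + 1) := Nat.dvd_sub hd hdvd
      rw [if_neg (fun h => hn ((hmem n).1 h).2), if_pos hd, if_pos h1, if_pos h2, sub_self]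
  · rw [if_neg (fun h => hd ((hmem n).1 h).1), if_neg hd]
    split_ifs with h1 h2
    · exfalso
      apply hd
      have := Nat.dvd_add h2 hdvd
      rwa [Nat.sub_add_cancel h1] at this
    · simp
    · simp

/-- `g r j` for odd `j = 2k-1` is the `k`-th odd-indexed `(2r+1)`-gonal number. -/
def g (r j : ℕ) : ℕ := j * ((2 * r - 1) * (j / 2) + 1)

def Gset (r : ℕ) : Set ℕ :=
  {m | ∃ k : ℕ, 0 < k ∧ m = (2 * k - 1) * ((2 * r - 1) * k - (2 * r - 2))}

theorem gon_eq {r k : ℕ} (hr : 1 ≤ r) (hk : 0 < k) :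
    (2 * k - 1) * ((2 * r - 1) * k - (2 * r - 2)) = g r (2 * k - 1) := by
  obtain ⟨k', rfl⟩ : ∃ k', k = k' + 1 := ⟨k - 1, by omega⟩
  unfold g
  have h1 : (2 * (k' + 1) - 1) / 2 = k' := by omega
  rw [h1]
  congr 1
  have h2 : (2 * r - 1) * (k' + 1) = (2 * r - 1) * k' + (2 * r - 1) := by ring
  rw [h2]
  set c := (2 * r - 1) * k' with hc
  omega

theorem g_mem {r j : ℕ} (hr : 1 ≤ r) (hj : Odd j) : g r j ∈ Gset r := by
  obtain ⟨t, rfl⟩ := hj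
  refine ⟨t + 1, Nat.succ_pos _, ?_⟩
  rw [gon_eq hr (Nat.succ_pos _)]
  have h : 2 * (t + 1) - 1 = 2 * t + 1 := by omega
  rw [h]

theorem le_g (r j : ℕ) : j ≤ g r j :=
  Nat.le_mul_of_pos_right _ (Nat.succ_pos _)

theorem Gset_elim {r m : ℕ} (hr : 1 ≤ r) (hm : m ∈ Gset r) :
    ∃ j, Odd j ∧ 1 ≤ j ∧ j ≤ m ∧ g r j = m := by
  obtain ⟨k, hk, rfl⟩ := hm
  refine ⟨2 * k - 1, ⟨k - 1, by omega⟩, by omega, ?_, (gon_eq hr hk).symm⟩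
  rw [gon_eq hr hk]
  exact le_g _ _

theorem g_strictMono {r j1 j2 : ℕ} (h : j1 < j2) : g r j1 < g r j2 := by
  have hd : j1 / 2 ≤ j2 / 2 := Nat.div_le_div_right h.le
  have step : j1 * ((2 * r - 1) * (j1 / 2) + 1) ≤ j1 * ((2 * r - 1) * (j2 / 2) + 1) :=
    Nat.mul_le_mul_left _ (Nat.add_le_add_right (Nat.mul_le_mul_left _ hd) 1)
  have step2 : j1 * ((2 * r - 1) * (j2 / 2) + 1) < j2 * ((2 * r - 1) * (j2 / 2) + 1) :=
    (Nat.mul_lt_mul_right (Nat.succ_pos _)).mpr h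
  exact lt_of_le_of_lt step step2

def cA (r j : ℕ) : Set ℕ := if Odd j then {t | t ≤ (2 * r - 1) * (j / 2)} else Set.univ

def cB (r j : ℕ) : Set ℕ := if j ∈ Gset r then ({0} : Set ℕ) else Set.univ

theorem parts_mem_Icc {n : ℕ} (p : n.Partition) {j : ℕ} (hj : j ∈ p.parts) :
    j ∈ Finset.Icc 1 n := by
  rw [mem_Icc]
  refine ⟨p.parts_pos hj, ?_⟩
  simpa [p.parts_sum] using Multiset.single_le_sum (fun _ _ => Nat.zero_le _) _ hj


theorem countA (α : Type*) [CommSemiring α] (r n : ℕ) :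
    ((Nat.card {p : n.Partition //
        ∀ k : ℕ, 1 ≤ k → p.parts.count (2 * k - 1) ≤ (2 * r - 1) * (k - 1)} : ℕ) : α) =
      coeff (R := α) n (∏ i ∈ Finset.Icc 1 n, indicatorSeries α ((· * i) '' cA r i)) := by
  rw [← partialGF_prop α n (Finset.Icc 1 n) (fun i hi => by rw [mem_Icc] at hi; omega)
      (cA r) (fun i _ => by unfold cA; split_ifs <;> simp)]
  congr 1
  rw [Nat.card_eq_fintype_card, Fintype.card_subtype]
  congr 1
  ext p
  simp only [mem_filter, mem_univ, true_and]
  constructor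
  · intro h
    refine ⟨fun j => ?_, fun j hj => parts_mem_Icc p hj⟩
    unfold cA
    split_ifs with hodd
    · obtain ⟨t, rfl⟩ := hodd
      have ht := h (t + 1) (by omega)
      have e1 : 2 * (t + 1) - 1 = 2 * t + 1 := by omega
      have e2 : (2 * t + 1) / 2 = t := by omega
      rw [e1] at ht
      simp only [Set.mem_setOf_eq, e2]
      simpa using ht
    · trivial
  · rintro ⟨h, -⟩ k hk
    have ht := h (2 * k - 1)
    unfold cA at ht
    rw [if_pos ⟨k - 1, by omega⟩] at ht
    have e2 : (2 * k - 1) / 2 = k - 1 := by omega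
    rw [Set.mem_setOf_eq, e2] at ht
    exact ht

theorem countB (α : Type*) [CommSemiring α] (r n : ℕ) :
    ((Nat.card {p : n.Partition //
        ∀ i ∈ p.parts, ¬ ∃ k : ℕ, 0 < k ∧ i = (2 * k - 1) * ((2 * r - 1) * k - (2 * r - 2))}
        : ℕ) : α) =
      coeff (R := α) n (∏ i ∈ Finset.Icc 1 n, indicatorSeries α ((· * i) '' cB r i)) := by
  rw [← partialGF_prop α n (Finset.Icc 1 n) (fun i hi => by rw [mem_Icc] at hi; omega)
      (cB r) (fun i _ => by unfold cB; split_ifs <;> simp)]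
  congr 1
  rw [Nat.card_eq_fintype_card, Fintype.card_subtype]
  congr 1
  ext p
  simp only [mem_filter, mem_univ, true_and]
  constructor
  · intro h
    refine ⟨fun j => ?_, fun j hj => parts_mem_Icc p hj⟩
    unfold cB
    split_ifs with hG
    · have : j ∉ p.parts := fun hj => h j hj hG
      simp [Multiset.count_eq_zero.2 this]
    · trivial
  · rintro ⟨h, -⟩ i hi hG
    have ht := h i
    unfold cB at ht
    rw [if_pos (show i ∈ Gset r from hG)] at ht
    simp only [Set.mem_singleton_iff, Multiset.count_eq_zero] at ht
    exact ht hi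

theorem gfA [Field α] (r n : ℕ) :
    (∏ i ∈ Finset.Icc 1 n, indicatorSeries α ((· * i) '' cA r i)) =
      (∏ i ∈ Finset.Icc 1 n, (1 - (X : PowerSeries α) ^ i)⁻¹) *
        ∏ i ∈ (Finset.Icc 1 n).filter (fun i => Odd i), (1 - (X : PowerSeries α) ^ g r i) := by
  rw [prod_filter, ← prod_mul_distrib]
  apply prod_congr rfl
  intro i hi
  rw [mem_Icc] at hi
  obtain ⟨i, rfl⟩ : ∃ i', i = i' + 1 := ⟨i - 1, by omega⟩
  unfold cA
  split_ifs with hodd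
  · rw [indicator_trunc_geom, mul_comm]
    rfl
  · rw [num_series', mul_one]
    have hset : ((· * (i + 1)) '' Set.univ) = {k | i + 1 ∣ k} := by
      ext t
      simp only [Set.image_univ, Set.mem_range, Set.mem_setOf_eq]
      constructor
      · rintro ⟨t, rfl⟩
        exact Dvd.intro_left t rfl
      · rintro ⟨t, rfl⟩
        exact ⟨t, mul_comm _ _⟩
    rw [hset]

theorem gfB [Field α] (r n : ℕ) :
    (∏ i ∈ Finset.Icc 1 n, indicatorSeries α ((· * i) '' cB r i)) =
      ∏ i ∈ (Finset.Icc 1 n).filter (fun i => i ∉ Gset r), (1 - (X : PowerSeries α) ^ i)⁻¹ := by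
  rw [prod_filter]
  apply prod_congr rfl
  intro i hi
  rw [mem_Icc] at hi
  obtain ⟨i, rfl⟩ : ∃ i', i = i' + 1 := ⟨i - 1, by omega⟩
  unfold cB
  by_cases hG : (i + 1) ∈ Gset r
  · rw [if_pos hG, if_neg (not_not.2 hG)]
    have himg : ((· * (i + 1)) '' ({0} : Set ℕ)) = {0} := by simp
    rw [himg]
    ext k
    rw [coeff_indicator, coeff_one]
    simp
  · rw [if_neg hG, if_pos hG, num_series']
    have hset : ((· * (i + 1)) '' Set.univ) = {k | i + 1 ∣ k} := by
      ext t
      simp only [Set.image_univ, Set.mem_range, Set.mem_setOf_eq]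
      constructor
      · rintro ⟨t, rfl⟩
        exact Dvd.intro_left t rfl
      · rintro ⟨t, rfl⟩
        exact ⟨t, mul_comm _ _⟩
    rw [hset]


theorem sameCoeff [Field α] (r n : ℕ) (hr : 1 ≤ r) :
    coeff (R := α) n (∏ i ∈ Finset.Icc 1 n, indicatorSeries α ((· * i) '' cA r i)) =
      coeff (R := α) n (∏ i ∈ Finset.Icc 1 n, indicatorSeries α ((· * i) '' cB r i)) := by
  rw [gfA, gfB]
  set U := (Finset.Icc 1 n).filter (fun i => Odd i) with hU
  set T := (Finset.Icc 1 n).filter (fun i => i ∈ Gset r) with hT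
  have hsplitU : (∏ i ∈ U, (1 - (X : PowerSeries α) ^ g r i)) =
      (∏ i ∈ U.filter (fun i => g r i ≤ n), (1 - (X : PowerSeries α) ^ g r i)) *
        ∏ i ∈ U.filter (fun i => ¬ g r i ≤ n), (1 - (X : PowerSeries α) ^ g r i) :=
    (prod_filter_mul_prod_filter_not U _ _).symm
  have hsplitP : (∏ i ∈ Finset.Icc 1 n, (1 - (X : PowerSeries α) ^ i)⁻¹) =
      (∏ i ∈ T, (1 - (X : PowerSeries α) ^ i)⁻¹) *
        ∏ i ∈ (Finset.Icc 1 n).filter (fun i => i ∉ Gset r), (1 - (X : PowerSeries α) ^ i)⁻¹ :=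
    (prod_filter_mul_prod_filter_not (Finset.Icc 1 n) _ _).symm
  have key : (∏ i ∈ U.filter (fun i => g r i ≤ n), (1 - (X : PowerSeries α) ^ g r i)) =
      ∏ m ∈ T, (1 - (X : PowerSeries α) ^ m) := by
    apply Finset.prod_nbij (fun i => g r i)
    · intro a ha
      simp only [hU, hT, mem_filter, mem_Icc] at ha ⊢
      exact ⟨⟨le_trans ha.1.1.1 (le_g r a), ha.2⟩, g_mem hr ha.1.2⟩
    · intro a _ b _ hab
      by_contra hne
      rcases lt_or_gt_of_ne hne with h | h
      · exact absurd hab (g_strictMono h).ne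
      · exact absurd hab.symm (g_strictMono h).ne
    · intro m hm
      simp only [hT, coe_filter, mem_Icc, Set.mem_setOf_eq] at hm
      obtain ⟨j, hodd, hj1, hjm, hgj⟩ := Gset_elim hr hm.2
      refine ⟨j, ?_, hgj⟩
      simp only [hU, coe_filter, mem_filter, mem_Icc, Set.mem_setOf_eq]
      exact ⟨⟨⟨hj1, le_trans hjm hm.1.2⟩, hodd⟩, hgj ▸ hm.1.2⟩
    · intros
      rfl
  have cancel : (∏ i ∈ T, (1 - (X : PowerSeries α) ^ i)⁻¹) *
      ∏ m ∈ T, (1 - (X : PowerSeries α) ^ m) = 1 := by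
    rw [← prod_mul_distrib]
    apply prod_eq_one
    intro i hi
    simp only [hT, mem_filter, mem_Icc] at hi
    have h : constantCoeff (R := α) (1 - X ^ i) ≠ 0 := by
      rw [RingHom.map_sub, RingHom.map_pow, constantCoeff_one, constantCoeff_X,
        zero_pow (by omega : i ≠ 0), sub_zero]
      exact one_ne_zero
    rw [mul_comm, PowerSeries.mul_inv_cancel _ h]
  rw [hsplitU, hsplitP, key]
  have rearrange : (∏ i ∈ T, (1 - (X : PowerSeries α) ^ i)⁻¹) *
        (∏ i ∈ (Finset.Icc 1 n).filter (fun i => i ∉ Gset r), (1 - (X : PowerSeries α) ^ i)⁻¹) *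
        ((∏ m ∈ T, (1 - (X : PowerSeries α) ^ m)) *
          ∏ i ∈ U.filter (fun i => ¬ g r i ≤ n), (1 - (X : PowerSeries α) ^ g r i)) =
      (∏ i ∈ (Finset.Icc 1 n).filter (fun i => i ∉ Gset r), (1 - (X : PowerSeries α) ^ i)⁻¹) *
        (∏ i ∈ U.filter (fun i => ¬ g r i ≤ n), (1 - (X : PowerSeries α) ^ g r i)) *
        ((∏ i ∈ T, (1 - (X : PowerSeries α) ^ i)⁻¹) *
          ∏ m ∈ T, (1 - (X : PowerSeries α) ^ m)) := by
    ring
  rw [rearrange, cancel, mul_one]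
  apply coeff_mul_prod_one_sub_of_lt_order
  intro i hi
  simp only [mem_filter, not_le] at hi
  rw [order_X_pow]
  exact_mod_cast hi.2

end
end SellersAux

/-- Sellers' second generalization: for fixed `r ≥ 2`, the number of partitions of `n`
in which each odd part `2k - 1` (`k ≥ 1`) appears at most `(2r - 1) * (k - 1)` times
(even parts unrestricted) equals the number of partitions of `n` in which no part is an
odd-indexed `(2r+1)`-gonal number, i.e. of the form
`(2k - 1) * ((2r - 1) * k - (2r - 2))` for a positive integer `k`. -/
theorem sellers_odd_gons (r : ℕ) (hr : 2 ≤ r) (n : ℕ) :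
    Nat.card {p : n.Partition //
        ∀ k : ℕ, 1 ≤ k → p.parts.count (2 * k - 1) ≤ (2 * r - 1) * (k - 1)} =
      Nat.card {p : n.Partition //
        ∀ i ∈ p.parts, ¬ ∃ k : ℕ, 0 < k ∧ i = (2 * k - 1) * ((2 * r - 1) * k - (2 * r - 2))} := by
  have h1 := SellersAux.countA ℚ r n
  have h2 := SellersAux.countB ℚ r n
  have h3 := SellersAux.sameCoeff (α := ℚ) r n (by omega)
  exact_mod_cast h1.trans (h3.trans h2.symm)
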